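/- arXiv:2410.02206 — 2 statements merged into one kernel-verified Lean document; each statement's English description precedes it below -/
import Mathlib

section
/- Let (Ω, Σ, μ) be a measure space, φ : ℝ → ℝ Lipschitz with constant L(φ) and φ(0) = 0, K ∈ L²(Ω⁴) and h ∈ L²(Ω × ℝ, μ ⊗ dt). Define C(u₁, y₁, t₁, t₂) = ∫_{Ω²} φ(h(y₂, t₂)) K(u₁, u₂, y₁, y₂) φ(h(u₂, t₁)) dμ(y₂) dμ(u₂). Then C ∈ L²(Ω² × ℝ²) with ‖C‖_{L²(Ω²×ℝ²)} ≤ L(φ)²·‖h‖²_{L²(Ω×ℝ)}·‖K‖_{L²(Ω⁴)}. -/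
open MeasureTheory ENNReal

section Aux

variable {Ω : Type*} [MeasurableSpace Ω]

/-- The middle-swap permutation `((a,b),(c,d)) ↦ ((a,c),(b,d))` is measure preserving. -/
lemma perm_measurePreserving (μ : Measure Ω) [SigmaFinite μ] :
    MeasurePreserving (fun z : (Ω × Ω) × Ω × Ω => ((z.1.1, z.2.1), (z.1.2, z.2.2)))
      ((μ.prod μ).prod (μ.prod μ)) ((μ.prod μ).prod (μ.prod μ)) := by
  have hσ : MeasurePreserving (fun x : Ω × Ω × Ω => (x.2.1, (x.1, x.2.2)))
      (μ.prod (μ.prod μ)) (μ.prod (μ.prod μ)) := by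
    exact (measurePreserving_prodAssoc μ μ μ).comp
      ((Measure.measurePreserving_swap.prod (MeasurePreserving.id μ)).comp
        ((measurePreserving_prodAssoc μ μ μ).symm _))
  exact ((measurePreserving_prodAssoc μ μ (μ.prod μ)).symm _).comp
    (((MeasurePreserving.id μ).prod hσ).comp (measurePreserving_prodAssoc μ μ (μ.prod μ)))

/-- Lipschitz bound in `ℝ≥0∞`: `‖φ s‖ ≤ L ‖s‖`. -/
lemma lip_enorm_bound {φ : ℝ → ℝ} {L : NNReal} (hφ : LipschitzWith L φ) (hφ0 : φ 0 = 0)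
    (s : ℝ) : (‖φ s‖₊ : ℝ≥0∞) ≤ (L : ℝ≥0∞) * (‖s‖₊ : ℝ≥0∞) := by
  have h1 : dist (φ s) (φ 0) ≤ (L : ℝ) * dist s 0 := hφ.dist_le_mul s 0
  rw [hφ0, dist_zero_right, dist_zero_right] at h1
  rw [← ENNReal.coe_mul, ENNReal.coe_le_coe]
  have : ‖φ s‖₊ ≤ L * ‖s‖₊ := by
    rw [← NNReal.coe_le_coe]
    push_cast
    simpa using h1
  exact this

/-- L² seminorm as a lintegral of squared norms. -/
lemma elp_two_eq {α : Type*} [MeasurableSpace α] (f : α → ℝ) (m : Measure α) :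
    eLpNorm f 2 m = (∫⁻ x, (‖f x‖₊ : ℝ≥0∞) ^ 2 ∂m) ^ (1 / (2:ℝ)) := by
  rw [eLpNorm_eq_lintegral_rpow_enorm_toReal two_ne_zero ENNReal.ofNat_ne_top]
  rw [show ((2:ℝ≥0∞).toReal) = (2:ℝ) by norm_num]
  congr 1
  exact lintegral_congr fun x => ENNReal.rpow_two _

end Aux

/-- The covariance kernel
`C(u₁,y₁,t₁,t₂) = ∫_{Ω²} φ(h(y₂,t₂)) K(u₁,u₂,y₁,y₂) φ(h(u₂,t₁)) dμ(y₂)dμ(u₂)`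
belongs to `L²(Ω²×ℝ²)` with `‖C‖ ≤ L(φ)²‖h‖²‖K‖`. -/
theorem covariance_kernel_L2_bound
    {Ω : Type*} [MeasurableSpace Ω] (μ : Measure Ω) [SigmaFinite μ]
    (φ : ℝ → ℝ) (L : NNReal) (hφ : LipschitzWith L φ) (hφ0 : φ 0 = 0)
    (K : Ω → Ω → Ω → Ω → ℝ)
    (hK : MemLp (fun q : (Ω × Ω) × Ω × Ω => K q.1.1 q.1.2 q.2.1 q.2.2) 2
      ((μ.prod μ).prod (μ.prod μ)))
    (h : Ω × ℝ → ℝ) (hh : MemLp h 2 (μ.prod (volume : Measure ℝ))) :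
    MemLp
        (fun q : (Ω × Ω) × ℝ × ℝ =>
          ∫ u : Ω × Ω, φ (h (u.2, q.2.2)) * K q.1.1 u.1 q.1.2 u.2 * φ (h (u.1, q.2.1))
            ∂(μ.prod μ))
        2 ((μ.prod μ).prod ((volume : Measure ℝ).prod (volume : Measure ℝ))) ∧
      eLpNorm
          (fun q : (Ω × Ω) × ℝ × ℝ =>
            ∫ u : Ω × Ω, φ (h (u.2, q.2.2)) * K q.1.1 u.1 q.1.2 u.2 * φ (h (u.1, q.2.1))
              ∂(μ.prod μ))
          2 ((μ.prod μ).prod ((volume : Measure ℝ).prod (volume : Measure ℝ)))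
        ≤ (L : ℝ≥0∞) ^ 2 * (eLpNorm h 2 (μ.prod (volume : Measure ℝ))) ^ 2 *
            eLpNorm (fun q : (Ω × Ω) × Ω × Ω => K q.1.1 q.1.2 q.2.1 q.2.2) 2
              ((μ.prod μ).prod (μ.prod μ)) := by
  classical
  set ν : Measure ℝ := volume with hνdef
  set M4 : Measure ((Ω × Ω) × Ω × Ω) := (μ.prod μ).prod (μ.prod μ) with hM4def
  set P : Measure ((Ω × Ω) × ℝ × ℝ) := (μ.prod μ).prod (ν.prod ν) with hPdef
  -- measurable representatives
  set K' : (Ω × Ω) × Ω × Ω → ℝ := hK.1.mk _ with hK'def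
  have hK'sm : StronglyMeasurable K' := hK.1.stronglyMeasurable_mk
  have hKK' : (fun q : (Ω × Ω) × Ω × Ω => K q.1.1 q.1.2 q.2.1 q.2.2) =ᵐ[M4] K' :=
    hK.1.ae_eq_mk
  set h' : Ω × ℝ → ℝ := hh.1.mk _ with hh'def
  have hh'sm : StronglyMeasurable h' := hh.1.stronglyMeasurable_mk
  have hhh' : h =ᵐ[μ.prod ν] h' := hh.1.ae_eq_mk
  -- the regularized kernel
  set F' : (Ω × Ω) × ℝ × ℝ → ℝ := fun q =>
    ∫ u : Ω × Ω, φ (h' (u.2, q.2.2)) * K' ((q.1.1, u.1), (q.1.2, u.2)) * φ (h' (u.1, q.2.1))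
      ∂(μ.prod μ) with hF'def
  -- the original kernel agrees a.e. with the regularized one
  have hae_K : ∀ᵐ p : Ω × Ω ∂(μ.prod μ), ∀ᵐ u : Ω × Ω ∂(μ.prod μ),
      K p.1 u.1 p.2 u.2 = K' ((p.1, u.1), (p.2, u.2)) := by
    have h1 := (perm_measurePreserving μ).quasiMeasurePreserving.ae_eq hKK'
    exact Measure.ae_ae_of_ae_prod h1
  have hae_h : ∀ᵐ t : ℝ ∂ν, ∀ᵐ x : Ω ∂μ, h (x, t) = h' (x, t) := by
    have h1 := (Measure.measurePreserving_swap (μ := ν) (ν := μ)).quasiMeasurePreserving.ae_eq hhh'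
    exact Measure.ae_ae_of_ae_prod h1
  have hFF' : (fun q : (Ω × Ω) × ℝ × ℝ =>
      ∫ u : Ω × Ω, φ (h (u.2, q.2.2)) * K q.1.1 u.1 q.1.2 u.2 * φ (h (u.1, q.2.1))
        ∂(μ.prod μ)) =ᵐ[P] F' := by
    have e1 : ∀ᵐ q : (Ω × Ω) × ℝ × ℝ ∂P, ∀ᵐ u : Ω × Ω ∂(μ.prod μ),
        K q.1.1 u.1 q.1.2 u.2 = K' ((q.1.1, u.1), (q.1.2, u.2)) :=
      Measure.quasiMeasurePreserving_fst.ae hae_K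
    have e2 : ∀ᵐ q : (Ω × Ω) × ℝ × ℝ ∂P, ∀ᵐ x : Ω ∂μ, h (x, q.2.1) = h' (x, q.2.1) :=
      (Measure.quasiMeasurePreserving_fst.comp Measure.quasiMeasurePreserving_snd).ae hae_h
    have e3 : ∀ᵐ q : (Ω × Ω) × ℝ × ℝ ∂P, ∀ᵐ x : Ω ∂μ, h (x, q.2.2) = h' (x, q.2.2) :=
      (Measure.quasiMeasurePreserving_snd.comp Measure.quasiMeasurePreserving_snd).ae hae_h
    filter_upwards [e1, e2, e3] with q hq1 hq2 hq3
    refine integral_congr_ae ?_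
    have f2 : ∀ᵐ u : Ω × Ω ∂(μ.prod μ), h (u.1, q.2.1) = h' (u.1, q.2.1) :=
      Measure.quasiMeasurePreserving_fst.ae hq2
    have f3 : ∀ᵐ u : Ω × Ω ∂(μ.prod μ), h (u.2, q.2.2) = h' (u.2, q.2.2) :=
      Measure.quasiMeasurePreserving_snd.ae hq3
    filter_upwards [hq1, f2, f3] with u g1 g2 g3
    rw [g1, g2, g3]
  -- basic measurability facts
  have hφh'sm : StronglyMeasurable (fun z : Ω × ℝ => φ (h' z)) :=
    hφ.continuous.comp_stronglyMeasurable hh'sm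
  have hKm : Measurable (fun z : (Ω × Ω) × Ω × Ω => (‖K' z‖₊ : ℝ≥0∞)) := hK'sm.enorm
  have hφm : Measurable (fun z : Ω × ℝ => (‖φ (h' z)‖₊ : ℝ≥0∞)) := hφh'sm.enorm
  -- strong measurability of F'
  have hF'sm : StronglyMeasurable F' := by
    apply MeasureTheory.StronglyMeasurable.integral_prod_right'
      (f := fun z : ((Ω × Ω) × ℝ × ℝ) × Ω × Ω =>
        φ (h' (z.2.2, z.1.2.2)) * K' ((z.1.1.1, z.2.1), (z.1.1.2, z.2.2)) *
          φ (h' (z.2.1, z.1.2.1)))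
    refine StronglyMeasurable.mul (StronglyMeasurable.mul ?_ ?_) ?_
    · exact hφh'sm.comp_measurable (by fun_prop)
    · exact hK'sm.comp_measurable (by fun_prop)
    · exact hφh'sm.comp_measurable (by fun_prop)
  -- the key quantities
  set A : Ω × Ω → ℝ≥0∞ := fun p =>
    ∫⁻ u : Ω × Ω, (‖K' ((p.1, u.1), (p.2, u.2))‖₊ : ℝ≥0∞) ^ 2 ∂(μ.prod μ) with hAdef
  set G : ℝ → ℝ≥0∞ := fun t => ∫⁻ x : Ω, (‖φ (h' (x, t))‖₊ : ℝ≥0∞) ^ 2 ∂μ with hGdef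
  have hAm : Measurable A := by
    apply Measurable.lintegral_prod_right'
      (f := fun z : (Ω × Ω) × Ω × Ω => (‖K' ((z.1.1, z.2.1), (z.1.2, z.2.2))‖₊ : ℝ≥0∞) ^ 2)
    exact (hKm.comp (by fun_prop)).pow_const 2
  have hGm : Measurable G := by
    apply Measurable.lintegral_prod_left'
      (f := fun z : Ω × ℝ => (‖φ (h' z)‖₊ : ℝ≥0∞) ^ 2)
    exact hφm.pow_const 2
  -- pointwise Cauchy-Schwarz bound
  have key : ∀ q : (Ω × Ω) × ℝ × ℝ,
      (‖F' q‖₊ : ℝ≥0∞) ^ 2 ≤ A q.1 * (G q.2.1 * G q.2.2) := by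
    intro q
    have step1 : (‖F' q‖₊ : ℝ≥0∞) ≤
        ∫⁻ u : Ω × Ω, (‖K' ((q.1.1, u.1), (q.1.2, u.2))‖₊ : ℝ≥0∞) *
          ((‖φ (h' (u.1, q.2.1))‖₊ : ℝ≥0∞) * (‖φ (h' (u.2, q.2.2))‖₊ : ℝ≥0∞))
          ∂(μ.prod μ) := by
      refine (enorm_integral_le_lintegral_enorm _).trans_eq ?_
      refine lintegral_congr fun u => ?_
      simp only [nnnorm_mul, ENNReal.coe_mul, enorm_mul, ← enorm_eq_nnnorm]
      ring
    have hfm : AEMeasurable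
        (fun u : Ω × Ω => (‖K' ((q.1.1, u.1), (q.1.2, u.2))‖₊ : ℝ≥0∞)) (μ.prod μ) :=
      (hKm.comp (by fun_prop)).aemeasurable
    have hgm : AEMeasurable
        (fun u : Ω × Ω => (‖φ (h' (u.1, q.2.1))‖₊ : ℝ≥0∞) * (‖φ (h' (u.2, q.2.2))‖₊ : ℝ≥0∞))
        (μ.prod μ) :=
      ((hφm.comp (by fun_prop)).mul (hφm.comp (by fun_prop))).aemeasurable
    have step2 := ENNReal.lintegral_mul_le_Lp_mul_Lq (μ.prod μ)
      (p := 2) (q := 2) ⟨by norm_num, by norm_num, by norm_num⟩ hfm hgm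
    simp only [Pi.mul_apply] at step2
    have step3 : (∫⁻ u : Ω × Ω,
        ((‖φ (h' (u.1, q.2.1))‖₊ : ℝ≥0∞) * (‖φ (h' (u.2, q.2.2))‖₊ : ℝ≥0∞)) ^ (2 : ℝ)
          ∂(μ.prod μ)) = G q.2.1 * G q.2.2 := by
      have : ∀ u : Ω × Ω,
          ((‖φ (h' (u.1, q.2.1))‖₊ : ℝ≥0∞) * (‖φ (h' (u.2, q.2.2))‖₊ : ℝ≥0∞)) ^ (2 : ℝ)
            = (‖φ (h' (u.1, q.2.1))‖₊ : ℝ≥0∞) ^ 2 * (‖φ (h' (u.2, q.2.2))‖₊ : ℝ≥0∞) ^ 2 := by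
        intro u
        rw [ENNReal.mul_rpow_of_nonneg _ _ (by norm_num : (0:ℝ) ≤ 2),
          ENNReal.rpow_two, ENNReal.rpow_two]
      rw [lintegral_congr this]
      have hm1 : Measurable (fun x : Ω => (‖φ (h' (x, q.2.1))‖₊ : ℝ≥0∞)) :=
        hφm.comp (measurable_id.prodMk measurable_const)
      have hm2 : Measurable (fun x : Ω => (‖φ (h' (x, q.2.2))‖₊ : ℝ≥0∞)) :=
        hφm.comp (measurable_id.prodMk measurable_const)
      exact lintegral_prod_mul (hm1.pow_const 2).aemeasurable (hm2.pow_const 2).aemeasurable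
    have step4 : (∫⁻ u : Ω × Ω,
        (‖K' ((q.1.1, u.1), (q.1.2, u.2))‖₊ : ℝ≥0∞) ^ (2 : ℝ) ∂(μ.prod μ)) = A q.1 := by
      refine lintegral_congr fun u => ?_
      rw [ENNReal.rpow_two]
    have hchain : (‖F' q‖₊ : ℝ≥0∞) ≤
        (A q.1) ^ (1 / (2:ℝ)) * (G q.2.1 * G q.2.2) ^ (1 / (2:ℝ)) := by
      refine step1.trans (step2.trans_eq ?_)
      rw [step3, step4]
    calc (‖F' q‖₊ : ℝ≥0∞) ^ 2
        ≤ ((A q.1) ^ (1 / (2:ℝ)) * (G q.2.1 * G q.2.2) ^ (1 / (2:ℝ))) ^ 2 :=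
          pow_le_pow_left' hchain 2
      _ = A q.1 * (G q.2.1 * G q.2.2) := by
          rw [← ENNReal.rpow_two, ENNReal.mul_rpow_of_nonneg _ _ (by norm_num : (0:ℝ) ≤ 2),
            ← ENNReal.rpow_mul, ← ENNReal.rpow_mul]
          norm_num
  -- the global bound
  have main : (∫⁻ q, (‖F' q‖₊ : ℝ≥0∞) ^ 2 ∂P) ≤
      (∫⁻ p, A p ∂(μ.prod μ)) * ((∫⁻ t, G t ∂ν) * (∫⁻ t, G t ∂ν)) := by
    calc (∫⁻ q, (‖F' q‖₊ : ℝ≥0∞) ^ 2 ∂P)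
        ≤ ∫⁻ q, A q.1 * (G q.2.1 * G q.2.2) ∂P := lintegral_mono key
      _ = (∫⁻ p, A p ∂(μ.prod μ)) * (∫⁻ s : ℝ × ℝ, G s.1 * G s.2 ∂(ν.prod ν)) := by
          rw [hPdef]
          exact lintegral_prod_mul hAm.aemeasurable
            ((hGm.comp measurable_fst).mul (hGm.comp measurable_snd)).aemeasurable
      _ = (∫⁻ p, A p ∂(μ.prod μ)) * ((∫⁻ t, G t ∂ν) * (∫⁻ t, G t ∂ν)) := by
          rw [lintegral_prod_mul hGm.aemeasurable hGm.aemeasurable]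
  -- identify ∫A with the L² norm of K'
  have hA : (∫⁻ p, A p ∂(μ.prod μ)) = ∫⁻ z, (‖K' z‖₊ : ℝ≥0∞) ^ 2 ∂M4 := by
    have hperm : Measurable (fun z : (Ω × Ω) × Ω × Ω => ((z.1.1, z.2.1), (z.1.2, z.2.2))) :=
      (perm_measurePreserving μ).measurable
    have h1 : (∫⁻ p, A p ∂(μ.prod μ)) =
        ∫⁻ z : (Ω × Ω) × Ω × Ω,
          (‖K' ((z.1.1, z.2.1), (z.1.2, z.2.2))‖₊ : ℝ≥0∞) ^ 2 ∂((μ.prod μ).prod (μ.prod μ)) :=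
      (lintegral_prod (fun z : (Ω × Ω) × Ω × Ω =>
          (‖K' ((z.1.1, z.2.1), (z.1.2, z.2.2))‖₊ : ℝ≥0∞) ^ 2)
        ((hKm.comp hperm).pow_const 2).aemeasurable).symm
    rw [h1, hM4def]
    exact (perm_measurePreserving μ).lintegral_comp (hKm.pow_const 2)
  -- bound ∫G
  have hG : (∫⁻ t, G t ∂ν) ≤
      (L : ℝ≥0∞) ^ 2 * ∫⁻ z, (‖h' z‖₊ : ℝ≥0∞) ^ 2 ∂(μ.prod ν) := by
    have hswap : (∫⁻ t, G t ∂ν) = ∫⁻ z, (‖φ (h' z)‖₊ : ℝ≥0∞) ^ 2 ∂(μ.prod ν) := by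
      rw [lintegral_prod _ (hφm.pow_const 2).aemeasurable]
      exact (lintegral_lintegral_swap (hφm.pow_const 2).aemeasurable).symm
    rw [hswap]
    calc (∫⁻ z, (‖φ (h' z)‖₊ : ℝ≥0∞) ^ 2 ∂(μ.prod ν))
        ≤ ∫⁻ z, ((L : ℝ≥0∞) * (‖h' z‖₊ : ℝ≥0∞)) ^ 2 ∂(μ.prod ν) :=
          lintegral_mono fun z => pow_le_pow_left' (lip_enorm_bound hφ hφ0 _) 2
      _ = (L : ℝ≥0∞) ^ 2 * ∫⁻ z, (‖h' z‖₊ : ℝ≥0∞) ^ 2 ∂(μ.prod ν) := by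
          simp_rw [mul_pow]
          exact lintegral_const_mul _ ((hh'sm.enorm).pow_const 2)
  -- the main eLpNorm bound
  have hbound : eLpNorm F' 2 P ≤
      (L : ℝ≥0∞) ^ 2 * (eLpNorm h' 2 (μ.prod ν)) ^ 2 * eLpNorm K' 2 M4 := by
    rw [elp_two_eq F' P]
    have h2 : (∫⁻ q, (‖F' q‖₊ : ℝ≥0∞) ^ 2 ∂P) ^ (1 / (2:ℝ)) ≤
        ((∫⁻ p, A p ∂(μ.prod μ)) * ((∫⁻ t, G t ∂ν) * (∫⁻ t, G t ∂ν))) ^ (1 / (2:ℝ)) :=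
      ENNReal.rpow_le_rpow main (by norm_num)
    refine h2.trans ?_
    rw [ENNReal.mul_rpow_of_nonneg _ _ (by norm_num : (0:ℝ) ≤ 1/2),
      ENNReal.mul_rpow_of_nonneg _ _ (by norm_num : (0:ℝ) ≤ 1/2)]
    have hGG : (∫⁻ t, G t ∂ν) ^ (1 / (2:ℝ)) * (∫⁻ t, G t ∂ν) ^ (1 / (2:ℝ))
        = ∫⁻ t, G t ∂ν := by
      rw [← ENNReal.rpow_add_of_nonneg _ _ (by norm_num) (by norm_num)]
      norm_num
    have hKnorm : (∫⁻ p, A p ∂(μ.prod μ)) ^ (1 / (2:ℝ)) = eLpNorm K' 2 M4 := by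
      rw [hA, elp_two_eq K' M4]
    rw [hGG, hKnorm]
    calc eLpNorm K' 2 M4 * (∫⁻ t, G t ∂ν)
        ≤ eLpNorm K' 2 M4 *
            ((L : ℝ≥0∞) ^ 2 * ∫⁻ z, (‖h' z‖₊ : ℝ≥0∞) ^ 2 ∂(μ.prod ν)) :=
          mul_le_mul_right hG _
      _ = (L : ℝ≥0∞) ^ 2 * (eLpNorm h' 2 (μ.prod ν)) ^ 2 * eLpNorm K' 2 M4 := by
          have : (eLpNorm h' 2 (μ.prod ν)) ^ 2 = ∫⁻ z, (‖h' z‖₊ : ℝ≥0∞) ^ 2 ∂(μ.prod ν) := by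
            rw [elp_two_eq h' (μ.prod ν), ← ENNReal.rpow_two, ← ENNReal.rpow_mul]
            norm_num
          rw [this]; ring
  -- transfer back from the representatives
  have hKel : eLpNorm K' 2 M4 =
      eLpNorm (fun q : (Ω × Ω) × Ω × Ω => K q.1.1 q.1.2 q.2.1 q.2.2) 2 M4 :=
    (eLpNorm_congr_ae hKK').symm
  have hhel : eLpNorm h' 2 (μ.prod ν) = eLpNorm h 2 (μ.prod ν) :=
    (eLpNorm_congr_ae hhh').symm
  have hFel : eLpNorm (fun q : (Ω × Ω) × ℝ × ℝ =>
      ∫ u : Ω × Ω, φ (h (u.2, q.2.2)) * K q.1.1 u.1 q.1.2 u.2 * φ (h (u.1, q.2.1))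
        ∂(μ.prod μ)) 2 P = eLpNorm F' 2 P :=
    eLpNorm_congr_ae hFF'
  have hfinal : eLpNorm (fun q : (Ω × Ω) × ℝ × ℝ =>
      ∫ u : Ω × Ω, φ (h (u.2, q.2.2)) * K q.1.1 u.1 q.1.2 u.2 * φ (h (u.1, q.2.1))
        ∂(μ.prod μ)) 2 P ≤
      (L : ℝ≥0∞) ^ 2 * (eLpNorm h 2 (μ.prod ν)) ^ 2 *
        eLpNorm (fun q : (Ω × Ω) × Ω × Ω => K q.1.1 q.1.2 q.2.1 q.2.2) 2 M4 := by
    rw [hFel, ← hhel, ← hKel]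
    exact hbound
  constructor
  · refine ⟨hF'sm.aestronglyMeasurable.congr hFF'.symm, ?_⟩
    refine lt_of_le_of_lt hfinal ?_
    have h1 : (L : ℝ≥0∞) ^ 2 < ⊤ := by
      exact ENNReal.pow_lt_top ENNReal.coe_lt_top
    have h2 : (eLpNorm h 2 (μ.prod ν)) ^ 2 < ⊤ := ENNReal.pow_lt_top hh.2
    have h3 : eLpNorm (fun q : (Ω × Ω) × Ω × Ω => K q.1.1 q.1.2 q.2.1 q.2.2) 2 M4 < ⊤ := hK.2
    exact ENNReal.mul_lt_top (ENNReal.mul_lt_top h1 h2) h3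
  · exact hfinal
end

section
/- Under the hypotheses of the previous construction (φ Lipschitz with φ(0)=0, K ∈ L²(Ω⁴), h, h̃ ∈ L²(Ω × ℝ)), the bilinear pairing B(h̃, h̃) = ∫_{ℝ²}∫_{Ω²} h̃(x, t₁) C(x, y, t₁, t₂) h̃(y, t₂) dμ(x) dμ(y) dt₁ dt₂ satisfies the bound |B(h̃, h̃)| ≤ L(φ)²·‖K‖_{L²(Ω⁴)}·‖h‖²_{L²(Ω×ℝ)}·‖h̃‖²_{L²(Ω×ℝ)}. -/
open MeasureTheory ENNReal

private lemma mp_interchange {α β γ δ : Type*} [MeasurableSpace α] [MeasurableSpace β]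
    [MeasurableSpace γ] [MeasurableSpace δ]
    (μa : Measure α) (μb : Measure β) (μc : Measure γ) (μd : Measure δ)
    [SFinite μa] [SFinite μb] [SFinite μc] [SFinite μd] :
    MeasurePreserving (fun q : (α × β) × γ × δ => ((q.1.1, q.2.1), (q.1.2, q.2.2)))
      ((μa.prod μb).prod (μc.prod μd)) ((μa.prod μc).prod (μb.prod μd)) := by
  have h1 := measurePreserving_prodAssoc μa μb (μc.prod μd)
  have h2a := ((measurePreserving_prodAssoc μb μc μd).symm _)
  have h2b := (Measure.measurePreserving_swap (μ := μb) (ν := μc)).prod (MeasurePreserving.id μd)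
  have h2c := measurePreserving_prodAssoc μc μb μd
  have h2 := h2c.comp (h2b.comp h2a)
  have h3 := (MeasurePreserving.id μa).prod h2
  have h4 := ((measurePreserving_prodAssoc μa μc (μb.prod μd)).symm _)
  exact h4.comp (h3.comp h1)

/-- The bilinear pairing `B(h̃,h̃) = ∫ h̃(x,t₁) C(x,y,t₁,t₂) h̃(y,t₂)` built from the
covariance kernel `C` satisfies `|B| ≤ L(φ)²‖K‖‖h‖²‖h̃‖²`. -/
theorem covariance_bilinear_bound
    {Ω : Type*} [MeasurableSpace Ω] (μ : Measure Ω) [SigmaFinite μ]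
    (φ : ℝ → ℝ) (L : NNReal) (hφ : LipschitzWith L φ) (hφ0 : φ 0 = 0)
    (K : Ω → Ω → Ω → Ω → ℝ)
    (hK : MemLp (fun q : (Ω × Ω) × Ω × Ω => K q.1.1 q.1.2 q.2.1 q.2.2) 2
      ((μ.prod μ).prod (μ.prod μ)))
    (h ht : Ω × ℝ → ℝ)
    (hh : MemLp h 2 (μ.prod (volume : Measure ℝ)))
    (hht : MemLp ht 2 (μ.prod (volume : Measure ℝ))) :
    |∫ z : (Ω × Ω) × ℝ × ℝ,
        ht (z.1.1, z.2.1) *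
          (∫ u : Ω × Ω, φ (h (u.2, z.2.2)) * K z.1.1 u.1 z.1.2 u.2 * φ (h (u.1, z.2.1))
            ∂(μ.prod μ)) *
          ht (z.1.2, z.2.2)
        ∂((μ.prod μ).prod ((volume : Measure ℝ).prod (volume : Measure ℝ)))|
      ≤ (L : ℝ) ^ 2 *
          (eLpNorm (fun q : (Ω × Ω) × Ω × Ω => K q.1.1 q.1.2 q.2.1 q.2.2) 2
              ((μ.prod μ).prod (μ.prod μ))).toReal *
          ((eLpNorm h 2 (μ.prod (volume : Measure ℝ))).toReal) ^ 2 *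
          ((eLpNorm ht 2 (μ.prod (volume : Measure ℝ))).toReal) ^ 2 := by
  classical
  set ν : Measure ℝ := volume with hν
  set M : Measure (Ω × ℝ) := μ.prod ν with hM
  set MZ : Measure ((Ω × Ω) × ℝ × ℝ) := (μ.prod μ).prod (ν.prod ν) with hMZ
  set MQ : Measure ((Ω × Ω) × Ω × Ω) := (μ.prod μ).prod (μ.prod μ) with hMQ
  obtain ⟨hKsm, hK2⟩ := hK
  obtain ⟨hhsm, hh2⟩ := hh
  obtain ⟨htsm, hht2⟩ := hht
  -- measurable representatives
  set Km : (Ω × Ω) × Ω × Ω → ℝ := hKsm.mk _ with hKm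
  set hm : Ω × ℝ → ℝ := hhsm.mk h with hhm
  set htm : Ω × ℝ → ℝ := htsm.mk ht with hhtm
  set k : (Ω × Ω) × Ω × Ω → ℝ≥0∞ := fun q => (‖Km q‖₊ : ℝ≥0∞) with hk
  set b : Ω × ℝ → ℝ≥0∞ := fun p => (‖htm p‖₊ : ℝ≥0∞) with hb
  set g : Ω × ℝ → ℝ≥0∞ := fun p => (‖φ (hm p)‖₊ : ℝ≥0∞) with hg
  have hkm : Measurable k := hKsm.stronglyMeasurable_mk.measurable.enorm
  have hbm : Measurable b := htsm.stronglyMeasurable_mk.measurable.enorm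
  have hgm : Measurable g :=
    (hφ.continuous.measurable.comp hhsm.stronglyMeasurable_mk.measurable).enorm
  have hkt : ∀ q, k q ≠ ⊤ := fun q => ENNReal.coe_ne_top
  have hbt : ∀ p, b p ≠ ⊤ := fun p => ENNReal.coe_ne_top
  -- a.e. equalities
  have Eb : ∀ᵐ p ∂M, (‖ht p‖₊ : ℝ≥0∞) = b p :=
    htsm.ae_eq_mk.mono fun p hp => congrArg (fun r : ℝ => (‖r‖₊ : ℝ≥0∞)) hp
  have Eg : ∀ᵐ p ∂M, (‖φ (h p)‖₊ : ℝ≥0∞) = g p :=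
    hhsm.ae_eq_mk.mono fun p hp => congrArg (fun r : ℝ => (‖φ r‖₊ : ℝ≥0∞)) hp
  have Ek : ∀ᵐ q ∂MQ, (‖K q.1.1 q.1.2 q.2.1 q.2.2‖₊ : ℝ≥0∞) = k q :=
    hKsm.ae_eq_mk.mono fun q hq => congrArg (fun r : ℝ => (‖r‖₊ : ℝ≥0∞)) hq
  -- quasi-measure-preserving coordinate maps
  have hd := mp_interchange μ μ ν ν
  have hc := mp_interchange μ μ μ μ
  have hq1 : Measure.QuasiMeasurePreserving
      (fun z : (Ω × Ω) × ℝ × ℝ => (z.1.1, z.2.1)) MZ M :=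
    Measure.quasiMeasurePreserving_fst.comp hd.quasiMeasurePreserving
  have hq2 : Measure.QuasiMeasurePreserving
      (fun z : (Ω × Ω) × ℝ × ℝ => (z.1.2, z.2.2)) MZ M :=
    Measure.quasiMeasurePreserving_snd.comp hd.quasiMeasurePreserving
  have hqt1 : Measure.QuasiMeasurePreserving
      (fun z : (Ω × Ω) × ℝ × ℝ => z.2.1) MZ ν :=
    Measure.quasiMeasurePreserving_fst.comp Measure.quasiMeasurePreserving_snd
  have hqt2 : Measure.QuasiMeasurePreserving
      (fun z : (Ω × Ω) × ℝ × ℝ => z.2.2) MZ ν :=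
    Measure.quasiMeasurePreserving_snd.comp Measure.quasiMeasurePreserving_snd
  have EgSwap : ∀ᵐ t ∂ν, ∀ᵐ x ∂μ, (‖φ (h (x, t))‖₊ : ℝ≥0∞) = g (x, t) :=
    Measure.ae_ae_of_ae_prod (Measure.measurePreserving_swap.quasiMeasurePreserving.ae Eg)
  have EA1 : ∀ᵐ z ∂MZ, (‖ht (z.1.1, z.2.1)‖₊ : ℝ≥0∞) = b (z.1.1, z.2.1) := hq1.ae Eb
  have EA2 : ∀ᵐ z ∂MZ, (‖ht (z.1.2, z.2.2)‖₊ : ℝ≥0∞) = b (z.1.2, z.2.2) := hq2.ae Eb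
  have EA3 : ∀ᵐ z ∂MZ, ∀ᵐ x ∂μ, (‖φ (h (x, z.2.1))‖₊ : ℝ≥0∞) = g (x, z.2.1) := hqt1.ae EgSwap
  have EA4 : ∀ᵐ z ∂MZ, ∀ᵐ x ∂μ, (‖φ (h (x, z.2.2))‖₊ : ℝ≥0∞) = g (x, z.2.2) := hqt2.ae EgSwap
  have EK' : ∀ᵐ q ∂MQ, (‖K q.1.1 q.2.1 q.1.2 q.2.2‖₊ : ℝ≥0∞)
      = k ((q.1.1, q.2.1), (q.1.2, q.2.2)) := hc.quasiMeasurePreserving.ae Ek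
  have EA5 : ∀ᵐ z ∂MZ, ∀ᵐ u ∂(μ.prod μ),
      (‖K z.1.1 u.1 z.1.2 u.2‖₊ : ℝ≥0∞) = k ((z.1.1, u.1), (z.1.2, u.2)) :=
    Measure.quasiMeasurePreserving_fst.ae (Measure.ae_ae_of_ae_prod EK')
  -- helpers for square roots
  have hsqrt_sq : ∀ x : ℝ≥0∞, (x ^ (2:ℝ)) ^ (1/2:ℝ) = x := fun x => by
    rw [← ENNReal.rpow_mul]; norm_num
  have hsq_sqrt : ∀ x : ℝ≥0∞, (x ^ (1/2:ℝ)) ^ (2:ℝ) = x := fun x => by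
    rw [← ENNReal.rpow_mul]; norm_num
  have hmul_self : ∀ x : ℝ≥0∞, x * x = x ^ (2:ℝ) := fun x => by
    rw [show (2:ℝ) = ((2:ℕ):ℝ) by norm_num, ENNReal.rpow_natCast, sq]
  have hpq : Real.HolderConjugate 2 2 := Real.HolderConjugate.two_two
  set F : Ω × Ω → ℝ≥0∞ := fun p => ∫⁻ t, b (p.1, t) * g (p.2, t) ∂ν with hF
  have hFm : Measurable F := by
    rw [hF]
    exact Measurable.lintegral_prod_right'
      (f := fun w : (Ω × Ω) × ℝ => b (w.1.1, w.2) * g (w.1.2, w.2))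
      ((hbm.comp ((measurable_fst.fst).prodMk measurable_snd)).mul
        (hgm.comp ((measurable_fst.snd).prodMk measurable_snd)))
  -- the main a.e. pointwise bound
  have claim : ∀ᵐ z ∂MZ, (‖ht (z.1.1, z.2.1) *
        (∫ u : Ω × Ω, φ (h (u.2, z.2.2)) * K z.1.1 u.1 z.1.2 u.2 * φ (h (u.1, z.2.1))
          ∂(μ.prod μ)) * ht (z.1.2, z.2.2)‖₊ : ℝ≥0∞)
      ≤ b (z.1.1, z.2.1) *
          (∫⁻ u, g (u.2, z.2.2) * k ((z.1.1, u.1), (z.1.2, u.2)) * g (u.1, z.2.1) ∂(μ.prod μ)) *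
          b (z.1.2, z.2.2) := by
    filter_upwards [EA1, EA2, EA3, EA4, EA5] with z e1 e2 e3 e4 e5
    have inner_le : (‖∫ u : Ω × Ω, φ (h (u.2, z.2.2)) * K z.1.1 u.1 z.1.2 u.2 *
          φ (h (u.1, z.2.1)) ∂(μ.prod μ)‖₊ : ℝ≥0∞)
        ≤ ∫⁻ u, g (u.2, z.2.2) * k ((z.1.1, u.1), (z.1.2, u.2)) * g (u.1, z.2.1)
            ∂(μ.prod μ) := by
      refine le_trans (enorm_integral_le_lintegral_enorm _)
        (le_of_eq (lintegral_congr_ae ?_))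
      filter_upwards [Measure.quasiMeasurePreserving_fst.ae e3,
        Measure.quasiMeasurePreserving_snd.ae e4, e5] with u f3 f4 f5
      rw [enorm_eq_nnnorm, nnnorm_mul, nnnorm_mul, ENNReal.coe_mul, ENNReal.coe_mul, f3, f4, f5]
    rw [nnnorm_mul, nnnorm_mul, ENNReal.coe_mul, ENNReal.coe_mul, e1, e2]
    exact mul_le_mul' (mul_le_mul' le_rfl inner_le) le_rfl
  -- rearrangement of the iterated integral
  have eqA : (∫⁻ z, b (z.1.1, z.2.1) *
        (∫⁻ u, g (u.2, z.2.2) * k ((z.1.1, u.1), (z.1.2, u.2)) * g (u.1, z.2.1) ∂(μ.prod μ)) *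
        b (z.1.2, z.2.2) ∂MZ)
      = ∫⁻ q, k q * (F q.1 * F q.2) ∂MQ := by
    have m0 : Measurable (fun w : ((Ω × Ω) × ℝ × ℝ) × Ω × Ω =>
        b (w.1.1.1, w.1.2.1) *
          (g (w.2.2, w.1.2.2) * k ((w.1.1.1, w.2.1), (w.1.1.2, w.2.2)) * g (w.2.1, w.1.2.1)) *
          b (w.1.1.2, w.1.2.2)) := by
      apply Measurable.fun_mul
      apply Measurable.fun_mul
      · exact hbm.comp ((measurable_fst.fst.fst).prodMk (measurable_fst.snd.fst))
      · apply Measurable.fun_mul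
        apply Measurable.fun_mul
        · exact hgm.comp ((measurable_snd.snd).prodMk (measurable_fst.snd.snd))
        · exact hkm.comp (((measurable_fst.fst.fst).prodMk (measurable_snd.fst)).prodMk
            ((measurable_fst.fst.snd).prodMk (measurable_snd.snd)))
        · exact hgm.comp ((measurable_snd.fst).prodMk (measurable_fst.snd.fst))
      · exact hbm.comp ((measurable_fst.fst.snd).prodMk (measurable_fst.snd.snd))
    calc (∫⁻ z, b (z.1.1, z.2.1) *
            (∫⁻ u, g (u.2, z.2.2) * k ((z.1.1, u.1), (z.1.2, u.2)) * g (u.1, z.2.1)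
              ∂(μ.prod μ)) * b (z.1.2, z.2.2) ∂MZ)
        = ∫⁻ z, ∫⁻ u, b (z.1.1, z.2.1) *
            (g (u.2, z.2.2) * k ((z.1.1, u.1), (z.1.2, u.2)) * g (u.1, z.2.1)) *
            b (z.1.2, z.2.2) ∂(μ.prod μ) ∂MZ := by
          refine lintegral_congr fun z => ?_
          rw [← lintegral_const_mul' _ _ (hbt _), ← lintegral_mul_const' _ _ (hbt _)]
      _ = ∫⁻ xy, ∫⁻ ts, ∫⁻ u, b (xy.1, ts.1) *
            (g (u.2, ts.2) * k ((xy.1, u.1), (xy.2, u.2)) * g (u.1, ts.1)) *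
            b (xy.2, ts.2) ∂(μ.prod μ) ∂(ν.prod ν) ∂(μ.prod μ) := by
          rw [hMZ]
          exact lintegral_prod _ (Measurable.lintegral_prod_right' m0).aemeasurable
      _ = ∫⁻ xy, ∫⁻ u, ∫⁻ ts, b (xy.1, ts.1) *
            (g (u.2, ts.2) * k ((xy.1, u.1), (xy.2, u.2)) * g (u.1, ts.1)) *
            b (xy.2, ts.2) ∂(ν.prod ν) ∂(μ.prod μ) ∂(μ.prod μ) := by
          refine lintegral_congr fun xy => lintegral_lintegral_swap ?_
          apply Measurable.aemeasurable
          apply Measurable.fun_mul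
          apply Measurable.fun_mul
          · exact hbm.comp (measurable_const.prodMk (measurable_fst.fst))
          · apply Measurable.fun_mul
            apply Measurable.fun_mul
            · exact hgm.comp ((measurable_snd.snd).prodMk (measurable_fst.snd))
            · exact hkm.comp ((measurable_const.prodMk (measurable_snd.fst)).prodMk
                (measurable_const.prodMk (measurable_snd.snd)))
            · exact hgm.comp ((measurable_snd.fst).prodMk (measurable_fst.fst))
          · exact hbm.comp (measurable_const.prodMk (measurable_fst.snd))
      _ = ∫⁻ xy, ∫⁻ u, k ((xy.1, u.1), (xy.2, u.2)) * (F (xy.1, u.1) * F (xy.2, u.2))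
            ∂(μ.prod μ) ∂(μ.prod μ) := by
          refine lintegral_congr fun xy => lintegral_congr fun u => ?_
          calc (∫⁻ ts : ℝ × ℝ, b (xy.1, ts.1) *
                  (g (u.2, ts.2) * k ((xy.1, u.1), (xy.2, u.2)) * g (u.1, ts.1)) *
                  b (xy.2, ts.2) ∂(ν.prod ν))
              = ∫⁻ ts : ℝ × ℝ, k ((xy.1, u.1), (xy.2, u.2)) *
                  ((fun t => b (xy.1, t) * g (u.1, t)) ts.1 *
                   (fun t => b (xy.2, t) * g (u.2, t)) ts.2) ∂(ν.prod ν) :=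
                lintegral_congr fun ts => by simp only; ring
            _ = k ((xy.1, u.1), (xy.2, u.2)) *
                  ∫⁻ ts : ℝ × ℝ, ((fun t => b (xy.1, t) * g (u.1, t)) ts.1 *
                   (fun t => b (xy.2, t) * g (u.2, t)) ts.2) ∂(ν.prod ν) :=
                lintegral_const_mul' _ _ (hkt _)
            _ = k ((xy.1, u.1), (xy.2, u.2)) * (F (xy.1, u.1) * F (xy.2, u.2)) := by
                have h1 : Measurable fun t : ℝ => b (xy.1, t) * g (u.1, t) :=
                  (hbm.comp (measurable_const.prodMk measurable_id)).mul
                    (hgm.comp (measurable_const.prodMk measurable_id))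
                have h2 : Measurable fun t : ℝ => b (xy.2, t) * g (u.2, t) :=
                  (hbm.comp (measurable_const.prodMk measurable_id)).mul
                    (hgm.comp (measurable_const.prodMk measurable_id))
                rw [lintegral_prod_mul h1.aemeasurable h2.aemeasurable]
      _ = ∫⁻ w, k ((w.1.1, w.2.1), (w.1.2, w.2.2)) * (F (w.1.1, w.2.1) * F (w.1.2, w.2.2))
            ∂MQ := by
          rw [hMQ]
          have hmw : Measurable fun w : (Ω × Ω) × Ω × Ω =>
              k ((w.1.1, w.2.1), (w.1.2, w.2.2)) * (F (w.1.1, w.2.1) * F (w.1.2, w.2.2)) :=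
            (hkm.comp (((measurable_fst.fst).prodMk (measurable_snd.fst)).prodMk
              ((measurable_fst.snd).prodMk (measurable_snd.snd)))).mul
              ((hFm.comp ((measurable_fst.fst).prodMk (measurable_snd.fst))).mul
                (hFm.comp ((measurable_fst.snd).prodMk (measurable_snd.snd))))
          exact (lintegral_prod (fun w : (Ω × Ω) × Ω × Ω =>
            k ((w.1.1, w.2.1), (w.1.2, w.2.2)) * (F (w.1.1, w.2.1) * F (w.1.2, w.2.2)))
            hmw.aemeasurable).symm
      _ = ∫⁻ q, k q * (F q.1 * F q.2) ∂MQ := by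
          refine (hc.lintegral_comp ?_).symm
          apply Measurable.mul
          · exact hkm.comp (((measurable_fst.fst).prodMk (measurable_snd.fst)).prodMk
              ((measurable_fst.snd).prodMk (measurable_snd.snd)))
          · exact (hFm.comp ((measurable_fst.fst).prodMk (measurable_snd.fst))).mul
              (hFm.comp ((measurable_fst.snd).prodMk (measurable_snd.snd)))
  -- Cauchy-Schwarz on MQ
  have hFF : Measurable fun q : (Ω × Ω) × Ω × Ω => F q.1 * F q.2 :=
    (hFm.comp measurable_fst).mul (hFm.comp measurable_snd)
  have stepCS : (∫⁻ q, k q * (F q.1 * F q.2) ∂MQ)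
      ≤ (∫⁻ q, k q ^ (2:ℝ) ∂MQ) ^ (1/2:ℝ) *
        (∫⁻ q, (F q.1 * F q.2) ^ (2:ℝ) ∂MQ) ^ (1/2:ℝ) := by
    simpa using ENNReal.lintegral_mul_le_Lp_mul_Lq MQ hpq hkm.aemeasurable hFF.aemeasurable
  have hrpm : Measurable fun p : Ω × Ω => F p ^ (2:ℝ) :=
    ENNReal.continuous_rpow_const.measurable.comp hFm
  have hsq : (∫⁻ q, (F q.1 * F q.2) ^ (2:ℝ) ∂MQ)
      = (∫⁻ p, F p ^ (2:ℝ) ∂(μ.prod μ)) * (∫⁻ p, F p ^ (2:ℝ) ∂(μ.prod μ)) := by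
    rw [hMQ, ← lintegral_prod_mul hrpm.aemeasurable hrpm.aemeasurable]
    exact lintegral_congr fun q => ENNReal.mul_rpow_of_nonneg _ _ (by norm_num)
  -- bound on S = ∫ F²
  have hbsq : Measurable fun p : Ω × ℝ => b p ^ (2:ℝ) :=
    ENNReal.continuous_rpow_const.measurable.comp hbm
  have hgsq : Measurable fun p : Ω × ℝ => g p ^ (2:ℝ) :=
    ENNReal.continuous_rpow_const.measurable.comp hgm
  have hBb : Measurable fun x : Ω => ∫⁻ t, b (x, t) ^ (2:ℝ) ∂ν :=
    Measurable.lintegral_prod_right' (f := fun w : Ω × ℝ => b (w.1, w.2) ^ (2:ℝ))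
      (hbsq.comp (measurable_fst.prodMk measurable_snd))
  have hGg : Measurable fun x : Ω => ∫⁻ t, g (x, t) ^ (2:ℝ) ∂ν :=
    Measurable.lintegral_prod_right' (f := fun w : Ω × ℝ => g (w.1, w.2) ^ (2:ℝ))
      (hgsq.comp (measurable_fst.prodMk measurable_snd))
  have hFle : ∀ p : Ω × Ω, F p ^ (2:ℝ)
      ≤ (∫⁻ t, b (p.1, t) ^ (2:ℝ) ∂ν) * (∫⁻ t, g (p.2, t) ^ (2:ℝ) ∂ν) := by
    intro p
    have hb1 : Measurable fun t : ℝ => b (p.1, t) :=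
      hbm.comp (measurable_const.prodMk measurable_id)
    have hg1 : Measurable fun t : ℝ => g (p.2, t) :=
      hgm.comp (measurable_const.prodMk measurable_id)
    have hcs := ENNReal.lintegral_mul_le_Lp_mul_Lq ν hpq hb1.aemeasurable hg1.aemeasurable
    calc F p ^ (2:ℝ)
        ≤ ((∫⁻ t, b (p.1, t) ^ (2:ℝ) ∂ν) ^ (1/2:ℝ) *
           (∫⁻ t, g (p.2, t) ^ (2:ℝ) ∂ν) ^ (1/2:ℝ)) ^ (2:ℝ) :=
          ENNReal.rpow_le_rpow (by simpa using hcs) (by norm_num)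
      _ = _ := by
          rw [ENNReal.mul_rpow_of_nonneg _ _ (by norm_num : (0:ℝ) ≤ 2), hsq_sqrt, hsq_sqrt]
  have hS : (∫⁻ p, F p ^ (2:ℝ) ∂(μ.prod μ))
      ≤ (∫⁻ p, b p ^ (2:ℝ) ∂M) * (∫⁻ p, g p ^ (2:ℝ) ∂M) := by
    calc (∫⁻ p, F p ^ (2:ℝ) ∂(μ.prod μ))
        ≤ ∫⁻ p, (∫⁻ t, b (p.1, t) ^ (2:ℝ) ∂ν) * (∫⁻ t, g (p.2, t) ^ (2:ℝ) ∂ν)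
            ∂(μ.prod μ) := lintegral_mono hFle
      _ = (∫⁻ x, ∫⁻ t, b (x, t) ^ (2:ℝ) ∂ν ∂μ) * (∫⁻ x, ∫⁻ t, g (x, t) ^ (2:ℝ) ∂ν ∂μ) :=
          lintegral_prod_mul hBb.aemeasurable hGg.aemeasurable
      _ = _ := by
          rw [hM, ← lintegral_prod _ hbsq.aemeasurable, ← lintegral_prod _ hgsq.aemeasurable]
  -- identify with the original functions
  have hT2 : (∫⁻ p, b p ^ (2:ℝ) ∂M) = ∫⁻ p, (‖ht p‖₊ : ℝ≥0∞) ^ (2:ℝ) ∂M :=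
    (lintegral_congr_ae (Eb.mono fun p hp => by rw [hp])).symm
  have hH2 : (∫⁻ p, (‖hm p‖₊ : ℝ≥0∞) ^ (2:ℝ) ∂M) = ∫⁻ p, (‖h p‖₊ : ℝ≥0∞) ^ (2:ℝ) ∂M :=
    (lintegral_congr_ae (hhsm.ae_eq_mk.mono fun p hp => by rw [hp])).symm
  have hg2 : (∫⁻ p, g p ^ (2:ℝ) ∂M)
      ≤ (L : ℝ≥0∞) ^ (2:ℝ) * ∫⁻ p, (‖h p‖₊ : ℝ≥0∞) ^ (2:ℝ) ∂M := by
    have hlip : ∀ p : Ω × ℝ, g p ≤ (L : ℝ≥0∞) * (‖hm p‖₊ : ℝ≥0∞) := fun p => by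
      rw [← ENNReal.coe_mul]
      exact ENNReal.coe_le_coe.2 (hφ.nnorm_le_mul hφ0 (hm p))
    calc (∫⁻ p, g p ^ (2:ℝ) ∂M)
        ≤ ∫⁻ p, (L : ℝ≥0∞) ^ (2:ℝ) * (‖hm p‖₊ : ℝ≥0∞) ^ (2:ℝ) ∂M := by
          refine lintegral_mono fun p => ?_
          rw [← ENNReal.mul_rpow_of_nonneg _ _ (by norm_num : (0:ℝ) ≤ 2)]
          exact ENNReal.rpow_le_rpow (hlip p) (by norm_num)
      _ = (L : ℝ≥0∞) ^ (2:ℝ) * ∫⁻ p, (‖hm p‖₊ : ℝ≥0∞) ^ (2:ℝ) ∂M :=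
          lintegral_const_mul' _ _
            (ENNReal.rpow_ne_top_of_nonneg (by norm_num) ENNReal.coe_ne_top)
      _ = _ := by rw [hH2]
  have hA2 : (∫⁻ q, k q ^ (2:ℝ) ∂MQ)
      = ∫⁻ q, (‖K q.1.1 q.1.2 q.2.1 q.2.2‖₊ : ℝ≥0∞) ^ (2:ℝ) ∂MQ :=
    (lintegral_congr_ae (Ek.mono fun q hq => by rw [hq])).symm
  -- eLpNorm identities
  set eK := eLpNorm (fun q : (Ω × Ω) × Ω × Ω => K q.1.1 q.1.2 q.2.1 q.2.2) 2 MQ with heKd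
  set eh := eLpNorm h 2 M with hehd
  set eht := eLpNorm ht 2 M with hehtd
  have heK : eK = (∫⁻ q, (‖K q.1.1 q.1.2 q.2.1 q.2.2‖₊ : ℝ≥0∞) ^ (2:ℝ) ∂MQ) ^ (1/2:ℝ) := by
    rw [heKd, eLpNorm_eq_lintegral_rpow_enorm_toReal (by norm_num) (by norm_num)]
    norm_num; rfl
  have heh : eh = (∫⁻ p, (‖h p‖₊ : ℝ≥0∞) ^ (2:ℝ) ∂M) ^ (1/2:ℝ) := by
    rw [hehd, eLpNorm_eq_lintegral_rpow_enorm_toReal (by norm_num) (by norm_num)]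
    norm_num; rfl
  have heht : eht = (∫⁻ p, (‖ht p‖₊ : ℝ≥0∞) ^ (2:ℝ) ∂M) ^ (1/2:ℝ) := by
    rw [hehtd, eLpNorm_eq_lintegral_rpow_enorm_toReal (by norm_num) (by norm_num)]
    norm_num; rfl
  have hT2' : (∫⁻ p, (‖ht p‖₊ : ℝ≥0∞) ^ (2:ℝ) ∂M) = eht ^ (2:ℝ) := by
    rw [heht, hsq_sqrt]
  have hH2' : (∫⁻ p, (‖h p‖₊ : ℝ≥0∞) ^ (2:ℝ) ∂M) = eh ^ (2:ℝ) := by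
    rw [heh, hsq_sqrt]
  -- the full ENNReal-valued bound
  have hV : (∫⁻ p, F p ^ (2:ℝ) ∂(μ.prod μ))
      ≤ eht ^ (2:ℝ) * ((L : ℝ≥0∞) ^ (2:ℝ) * eh ^ (2:ℝ)) := by
    refine le_trans hS ?_
    rw [hT2, hT2', ← hH2']
    exact mul_le_mul' le_rfl (by rw [hH2']; exact le_trans hg2 (by rw [hH2']))
  have hchain : (‖∫ z : (Ω × Ω) × ℝ × ℝ,
        ht (z.1.1, z.2.1) *
          (∫ u : Ω × Ω, φ (h (u.2, z.2.2)) * K z.1.1 u.1 z.1.2 u.2 * φ (h (u.1, z.2.1))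
            ∂(μ.prod μ)) *
          ht (z.1.2, z.2.2) ∂MZ‖₊ : ℝ≥0∞)
      ≤ eK * (eht ^ (2:ℝ) * ((L : ℝ≥0∞) ^ (2:ℝ) * eh ^ (2:ℝ))) := by
    refine le_trans (enorm_integral_le_lintegral_enorm _) ?_
    refine le_trans (lintegral_mono_ae claim) ?_
    rw [eqA]
    refine le_trans stepCS ?_
    rw [hA2, hsq, ← heK]
    refine mul_le_mul' le_rfl ?_
    rw [hmul_self (∫⁻ p, F p ^ (2:ℝ) ∂(μ.prod μ))]
    calc ((∫⁻ p, F p ^ (2:ℝ) ∂(μ.prod μ)) ^ (2:ℝ)) ^ (1/2:ℝ)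
        = ∫⁻ p, F p ^ (2:ℝ) ∂(μ.prod μ) := hsqrt_sq _
      _ ≤ _ := hV
  have hfin : eK * (eht ^ (2:ℝ) * ((L : ℝ≥0∞) ^ (2:ℝ) * eh ^ (2:ℝ))) ≠ ⊤ := by
    apply ENNReal.mul_ne_top hK2.ne
    apply ENNReal.mul_ne_top (ENNReal.rpow_ne_top_of_nonneg (by norm_num) hht2.ne)
    exact ENNReal.mul_ne_top (ENNReal.rpow_ne_top_of_nonneg (by norm_num) ENNReal.coe_ne_top)
      (ENNReal.rpow_ne_top_of_nonneg (by norm_num) hh2.ne)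
  calc |∫ z : (Ω × Ω) × ℝ × ℝ,
        ht (z.1.1, z.2.1) *
          (∫ u : Ω × Ω, φ (h (u.2, z.2.2)) * K z.1.1 u.1 z.1.2 u.2 * φ (h (u.1, z.2.1))
            ∂(μ.prod μ)) *
          ht (z.1.2, z.2.2) ∂MZ|
      = ((‖∫ z : (Ω × Ω) × ℝ × ℝ,
        ht (z.1.1, z.2.1) *
          (∫ u : Ω × Ω, φ (h (u.2, z.2.2)) * K z.1.1 u.1 z.1.2 u.2 * φ (h (u.1, z.2.1))
            ∂(μ.prod μ)) *
          ht (z.1.2, z.2.2) ∂MZ‖₊ : ℝ≥0∞)).toReal := by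
        rw [ENNReal.coe_toReal, coe_nnnorm, Real.norm_eq_abs]
    _ ≤ (eK * (eht ^ (2:ℝ) * ((L : ℝ≥0∞) ^ (2:ℝ) * eh ^ (2:ℝ)))).toReal :=
        ENNReal.toReal_mono hfin hchain
    _ = (L : ℝ) ^ 2 * eK.toReal * eh.toReal ^ 2 * eht.toReal ^ 2 := by
        rw [ENNReal.toReal_mul, ENNReal.toReal_mul, ENNReal.toReal_mul,
          ← ENNReal.toReal_rpow, ← ENNReal.toReal_rpow, ← ENNReal.toReal_rpow,
          ENNReal.coe_toReal]
        rw [show (2:ℝ) = ((2:ℕ):ℝ) by norm_num, Real.rpow_natCast, Real.rpow_natCast,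
          Real.rpow_natCast]
        ring
end
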